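/- In the brick wall tiling of ℝ² with k colors (k ≥ 3), where each tile is an axis-parallel rectangle of width √(2/(k−2)) and height √((k−2)/2), arranged in rows of adjacent rectangles colored in round-robin fashion (with the second row shifted by half a brick for odd k, or colored with a shift of k/2 for even k), the minimal Euclidean distance between two same-colored points lying in different tiles equals √((k−2)/2). -/

import Mathlib

/-- The width of a brick in the brick wall construction with `k` colors. -/
noncomputable def brickWidth (k : ℕ) : ℝ := Real.sqrt (2 / ((k : ℝ) - 2))

/-- The height of a brick in the brick wall construction with `k` colors. -/
noncomputable def brickHeight (k : ℕ) : ℝ := Real.sqrt (((k : ℝ) - 2) / 2)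

/-- Horizontal offset of row `r`: odd rows are indented by half a brick when `k` is odd. -/
noncomputable def brickOffset (k : ℕ) (r : ℤ) : ℝ :=
  if k % 2 = 1 ∧ r % 2 = 1 then brickWidth k / 2 else 0

/-- The brick in row `r`, column `c`: an axis-parallel rectangle of width `brickWidth k`
and height `brickHeight k`. -/
noncomputable def brick (k : ℕ) (r c : ℤ) : Set (EuclideanSpace ℝ (Fin 2)) :=
  {x | x 0 ∈ Set.Icc ((c : ℝ) * brickWidth k + brickOffset k r)
          (((c : ℝ) + 1) * brickWidth k + brickOffset k r) ∧
       x 1 ∈ Set.Icc ((r : ℝ) * brickHeight k) (((r : ℝ) + 1) * brickHeight k)}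

/-- Round-robin coloring: colors are assigned cyclically along each row, and the color
sequence of odd rows is shifted by `k/2` (k even) or `(k+1)/2` (k odd). -/
def brickColor (k : ℕ) (r c : ℤ) : ZMod k :=
  (c : ZMod k) + (if r % 2 = 1 then ((if k % 2 = 0 then k / 2 else (k + 1) / 2 : ℕ) : ZMod k) else 0)

lemma coord_le_dist (x y : EuclideanSpace ℝ (Fin 2)) (i : Fin 2) : |x i - y i| ≤ dist x y := by
  have h1 : dist (x i) (y i) ^ 2 ≤ ∑ j, dist (x j) (y j) ^ 2 :=
    Finset.single_le_sum (f := fun j => dist (x j) (y j) ^ 2) (fun j _ => sq_nonneg _)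
      (Finset.mem_univ i)
  calc |x i - y i| = dist (x i) (y i) := (Real.dist_eq _ _).symm
    _ = Real.sqrt (dist (x i) (y i) ^ 2) := (Real.sqrt_sq dist_nonneg).symm
    _ ≤ Real.sqrt (∑ j, dist (x j) (y j) ^ 2) := Real.sqrt_le_sqrt h1
    _ = dist x y := (EuclideanSpace.dist_eq x y).symm

lemma sub_le_dist (x y : EuclideanSpace ℝ (Fin 2)) (i : Fin 2) :
    y i - x i ≤ dist x y ∧ x i - y i ≤ dist x y := by
  have h := coord_le_dist x y i
  cases abs_cases (x i - y i) with
  | inl h2 => exact ⟨by linarith [h2.1], by linarith [h2.1]⟩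
  | inr h2 => exact ⟨by linarith [h2.1], by linarith [h2.1]⟩

lemma zmod_cong {k : ℕ} {a b : ℤ} (h : (a : ZMod k) = (b : ZMod k)) :
    ∃ m : ℤ, b = a + m * k := by
  rw [ZMod.intCast_eq_intCast_iff, Int.ModEq] at h
  obtain ⟨m, hm⟩ := Int.ModEq.dvd h
  exact ⟨m, by linarith⟩

lemma basic_facts (k : ℕ) (hk : 3 ≤ k) :
    0 < brickWidth k ∧ brickHeight k = (((k : ℝ) - 2) / 2) * brickWidth k := by
  have hK : (1:ℝ) ≤ (k:ℝ) - 2 := by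
    have : (3:ℝ) ≤ (k:ℝ) := by exact_mod_cast hk
    linarith
  have hw : 0 < brickWidth k := Real.sqrt_pos.mpr (by positivity)
  refine ⟨hw, ?_⟩
  have hw2 : brickWidth k ^ 2 = 2 / ((k:ℝ) - 2) := Real.sq_sqrt (by positivity)
  have h1 : ((((k:ℝ) - 2)/2) * brickWidth k) ^ 2 = ((k:ℝ) - 2)/2 := by
    rw [mul_pow, hw2]; field_simp
  rw [brickHeight]
  conv_lhs => rw [← h1]
  exact Real.sqrt_sq (by positivity)

/-- Vertical separation: rows at least two apart. -/
lemma vert_lemma (k : ℕ) (hk : 3 ≤ k) (r c r' c' : ℤ) (h2 : r + 2 ≤ r')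
    (x y : EuclideanSpace ℝ (Fin 2)) (hx : x ∈ brick k r c) (hy : y ∈ brick k r' c') :
    brickHeight k ≤ dist x y := by
  obtain ⟨hw, hh⟩ := basic_facts k hk
  have hk3 : (3:ℝ) ≤ (k:ℝ) := by exact_mod_cast hk
  obtain ⟨-, ⟨hx1l, hx1r⟩⟩ := hx
  obtain ⟨-, ⟨hy1l, hy1r⟩⟩ := hy
  have h2' : (r:ℝ) + 2 ≤ (r':ℝ) := by exact_mod_cast h2
  have hgoal : brickHeight k ≤ y 1 - x 1 := by nlinarith
  linarith [(sub_le_dist x y 1).1]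

/-- Same row, same color, different columns. -/
lemma same_row_lemma (k : ℕ) (hk : 3 ≤ k) (r c c' : ℤ) (hcc : c ≠ c')
    (hcol : brickColor k r c = brickColor k r c')
    (x y : EuclideanSpace ℝ (Fin 2)) (hx : x ∈ brick k r c) (hy : y ∈ brick k r c') :
    brickHeight k ≤ dist x y := by
  obtain ⟨hw, hh⟩ := basic_facts k hk
  have hk3 : (3:ℝ) ≤ (k:ℝ) := by exact_mod_cast hk
  obtain ⟨⟨hx0l, hx0r⟩, -⟩ := hx
  obtain ⟨⟨hy0l, hy0r⟩, -⟩ := hy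
  have hcol2 : (c : ZMod k) = (c' : ZMod k) := by
    simpa [brickColor] using hcol
  obtain ⟨m, hm⟩ := zmod_cong hcol2
  have hmne : m ≠ 0 := by
    intro h0; rw [h0] at hm; simp at hm; exact hcc hm.symm
  have hmr : (c':ℝ) = (c:ℝ) + (m:ℝ) * k := by exact_mod_cast congrArg (fun n : ℤ => (n:ℝ)) hm
  rcases le_or_gt 1 m with hm1 | hm1
  · have hm1' : (1:ℝ) ≤ (m:ℝ) := by exact_mod_cast hm1
    have hcc2 : (k:ℝ) ≤ (c':ℝ) - (c:ℝ) := by nlinarith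
    have hp := mul_le_mul_of_nonneg_right hcc2 hw.le
    have hgoal : brickHeight k ≤ y 0 - x 0 := by nlinarith
    linarith [(sub_le_dist x y 0).1]
  · have hm1' : (m:ℝ) ≤ -1 := by exact_mod_cast (by omega : m ≤ -1)
    have hcc2 : (k:ℝ) ≤ (c:ℝ) - (c':ℝ) := by nlinarith
    have hp := mul_le_mul_of_nonneg_right hcc2 hw.le
    have hgoal : brickHeight k ≤ x 0 - y 0 := by nlinarith
    linarith [(sub_le_dist x y 0).2]

/-- Key lemma for mixed-parity rows: r even, r' odd. -/
lemma key_lemma (k : ℕ) (hk : 3 ≤ k) (r c r' c' : ℤ) (hr : r % 2 = 0) (hr' : r' % 2 = 1)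
    (hcol : brickColor k r c = brickColor k r' c')
    (x y : EuclideanSpace ℝ (Fin 2)) (hx : x ∈ brick k r c) (hy : y ∈ brick k r' c') :
    brickHeight k ≤ dist x y := by
  obtain ⟨hw, hh⟩ := basic_facts k hk
  set w := brickWidth k
  have hk3 : (3:ℝ) ≤ (k:ℝ) := by exact_mod_cast hk
  obtain ⟨⟨hx0l, hx0r⟩, -⟩ := hx
  obtain ⟨⟨hy0l, hy0r⟩, -⟩ := hy
  have hor : brickOffset k r = 0 := by simp [brickOffset, hr]
  rcases Nat.even_or_odd k with hke | hko
  · -- k even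
    have hk2 : k % 2 = 0 := Nat.even_iff.mp hke
    have hor' : brickOffset k r' = 0 := by simp [brickOffset, hk2]
    simp only [brickColor, hr, hr', hk2, if_true, if_false, reduceIte, add_zero] at hcol
    have hcol2 : (c : ZMod k) = ((c' + ((k / 2 : ℕ) : ℤ) : ℤ) : ZMod k) := by
      rw [Int.cast_add, Int.cast_natCast]
      simpa using hcol
    obtain ⟨m, hm⟩ := zmod_cong hcol2
    have hs' : ((k / 2 : ℕ) : ℤ) * 2 = (k : ℤ) := by omega
    have hm2 : 2 * c' + (k : ℤ) = 2 * c + 2 * m * k := by linear_combination 2 * hm - hs'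
    have hmr : 2 * (c':ℝ) + (k:ℝ) = 2 * (c:ℝ) + 2 * (m:ℝ) * k := by exact_mod_cast hm2
    rw [hor] at hx0l hx0r; rw [hor'] at hy0l hy0r
    rcases le_or_gt 1 m with hm1 | hm1
    · have hm1' : (1:ℝ) ≤ (m:ℝ) := by exact_mod_cast hm1
      have hcc : (k:ℝ)/2 ≤ (c':ℝ) - (c:ℝ) := by nlinarith
      have hp := mul_le_mul_of_nonneg_right hcc hw.le
      have hgoal : brickHeight k ≤ y 0 - x 0 := by nlinarith
      linarith [(sub_le_dist x y 0).1]
    · have hm1' : (m:ℝ) ≤ 0 := by exact_mod_cast (by omega : m ≤ 0)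
      have hcc : (k:ℝ)/2 ≤ (c:ℝ) - (c':ℝ) := by nlinarith
      have hp := mul_le_mul_of_nonneg_right hcc hw.le
      have hgoal : brickHeight k ≤ x 0 - y 0 := by nlinarith
      linarith [(sub_le_dist x y 0).2]
  · -- k odd
    have hk2 : k % 2 = 1 := Nat.odd_iff.mp hko
    have hk2' : ¬ (k % 2 = 0) := by omega
    have hor' : brickOffset k r' = w / 2 := by simp [brickOffset, hk2, hr']; rfl
    simp only [brickColor, hr, hr', hk2', if_true, if_false, reduceIte, add_zero] at hcol
    have hcol2 : (c : ZMod k) = ((c' + (((k+1) / 2 : ℕ) : ℤ) : ℤ) : ZMod k) := by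
      rw [Int.cast_add, Int.cast_natCast]
      simpa using hcol
    obtain ⟨m, hm⟩ := zmod_cong hcol2
    have hs' : (((k+1) / 2 : ℕ) : ℤ) * 2 = (k : ℤ) + 1 := by omega
    have hm2 : 2 * c' + (k : ℤ) + 1 = 2 * c + 2 * m * k := by linear_combination 2 * hm - hs'
    have hmr : 2 * (c':ℝ) + (k:ℝ) + 1 = 2 * (c:ℝ) + 2 * (m:ℝ) * k := by exact_mod_cast hm2
    rw [hor] at hx0l hx0r; rw [hor'] at hy0l hy0r
    rcases le_or_gt 1 m with hm1 | hm1
    · have hm1' : (1:ℝ) ≤ (m:ℝ) := by exact_mod_cast hm1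
      have hcc : ((k:ℝ)-1)/2 ≤ (c':ℝ) - (c:ℝ) := by nlinarith
      have hp := mul_le_mul_of_nonneg_right hcc hw.le
      have hgoal : brickHeight k ≤ y 0 - x 0 := by nlinarith
      linarith [(sub_le_dist x y 0).1]
    · have hm1' : (m:ℝ) ≤ 0 := by exact_mod_cast (by omega : m ≤ 0)
      have hcc : ((k:ℝ)+1)/2 ≤ (c:ℝ) - (c':ℝ) := by nlinarith
      have hp := mul_le_mul_of_nonneg_right hcc hw.le
      have hgoal : brickHeight k ≤ x 0 - y 0 := by nlinarith
      linarith [(sub_le_dist x y 0).2]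


/-- In the brick wall tiling of ℝ² with k ≥ 3 colors, the minimal Euclidean
distance between two same-colored points lying in different tiles equals √((k−2)/2). -/
theorem stmt_5 (k : ℕ) (hk : 3 ≤ k) :
    IsLeast {d : ℝ | ∃ r c r' c' : ℤ, (r, c) ≠ (r', c') ∧
        brickColor k r c = brickColor k r' c' ∧
        ∃ x ∈ brick k r c, ∃ y ∈ brick k r' c', d = dist x y}
      (Real.sqrt (((k : ℝ) - 2) / 2)) := by
  obtain ⟨hw, hh⟩ := basic_facts k hk
  have hk3 : (3:ℝ) ≤ (k:ℝ) := by exact_mod_cast hk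
  have hhpos : 0 < brickHeight k := by rw [hh]; nlinarith
  have hheq : Real.sqrt (((k : ℝ) - 2) / 2) = brickHeight k := rfl
  rw [hheq]
  constructor
  · -- membership: bricks (0,0) and (2,0)
    set X : EuclideanSpace ℝ (Fin 2) := (WithLp.equiv 2 (Fin 2 → ℝ)).symm ![0, brickHeight k]
      with hX
    set Y : EuclideanSpace ℝ (Fin 2) := (WithLp.equiv 2 (Fin 2 → ℝ)).symm ![0, 2 * brickHeight k]
      with hY
    have hX0 : X 0 = 0 := rfl
    have hX1 : X 1 = brickHeight k := rfl
    have hY0 : Y 0 = 0 := rfl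
    have hY1 : Y 1 = 2 * brickHeight k := rfl
    refine ⟨0, 0, 2, 0, by norm_num [Prod.ext_iff], by simp [brickColor], X, ?_, Y, ?_, ?_⟩
    · refine ⟨⟨?_, ?_⟩, ⟨?_, ?_⟩⟩ <;>
        simp only [hX0, hX1, brickOffset, Int.cast_zero, Int.cast_two] <;> norm_num
      · exact hw.le
      · exact hhpos.le
    · refine ⟨⟨?_, ?_⟩, ⟨?_, ?_⟩⟩ <;>
        simp only [hY0, hY1, brickOffset, Int.cast_zero, Int.cast_two] <;> norm_num
      · exact hw.le
      · linarith
    · rw [EuclideanSpace.dist_eq, Fin.sum_univ_two, hX0, hX1, hY0, hY1]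
      rw [dist_self, Real.dist_eq]
      rw [show |brickHeight k - 2 * brickHeight k| = brickHeight k by
        rw [abs_sub_comm, abs_of_nonneg (by linarith)]; ring]
      rw [show (0:ℝ)^2 + brickHeight k ^2 = brickHeight k ^ 2 by ring]
      exact (Real.sqrt_sq hhpos.le).symm
  · rintro d ⟨r, c, r', c', hne, hcol, x, hx, y, hy, rfl⟩
    rcases Int.emod_two_eq r with hr | hr <;> rcases Int.emod_two_eq r' with hr' | hr'
    · -- both even
      rcases eq_or_ne r r' with rfl | hrr
      · exact same_row_lemma k hk r c c' (fun h => hne (by rw [h])) hcol x y hx hy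
      · rcases (by omega : r + 2 ≤ r' ∨ r' + 2 ≤ r) with h2 | h2
        · exact vert_lemma k hk r c r' c' h2 x y hx hy
        · exact dist_comm x y ▸ vert_lemma k hk r' c' r c h2 y x hy hx
    · exact key_lemma k hk r c r' c' hr hr' hcol x y hx hy
    · exact dist_comm x y ▸ key_lemma k hk r' c' r c hr' hr hcol.symm y x hy hx
    · -- both odd
      rcases eq_or_ne r r' with rfl | hrr
      · exact same_row_lemma k hk r c c' (fun h => hne (by rw [h])) hcol x y hx hy
      · rcases (by omega : r + 2 ≤ r' ∨ r' + 2 ≤ r) with h2 | h2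
        · exact vert_lemma k hk r c r' c' h2 x y hx hy
        · exact dist_comm x y ▸ vert_lemma k hk r' c' r c h2 y x hy hx
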